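/- Let q > 0 and let s be a real number with s < q. Then the sequence of integrals n ↦ ∫_0^{n+1} (z^(-1/q) - (n+1)^(-1/q))^s · (1 - z/(n+1))^n dz (over natural numbers n) converges, as n → ∞, to Γ(1 - s/q). -/

import Mathlib

open MeasureTheory Real Filter Topology

lemma if2_key {q s : ℝ} (hq : 0 < q) {m n : ℕ} (hm : -s ≤ (m:ℝ)) (hn : 2*m+1 ≤ n)
    {z : ℝ} (hz : 0 < z) (hzN : z ≤ (n:ℝ)+1) :
    (z ^ (-1/q) - ((n:ℝ)+1) ^ (-1/q)) ^ s * (1 - z/((n:ℝ)+1)) ^ n ≤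
      (max 1 q)^m * (z ^ (-(s/q)) * Real.exp (-(1/2) * z)) := by
  set N : ℝ := (n:ℝ)+1 with hNdef
  have hN : 0 < N := by positivity
  have hK1 : (1:ℝ) ≤ max 1 q := le_max_left _ _
  have hKpos : (0:ℝ) < max 1 q := lt_of_lt_of_le one_pos hK1
  have hRHS : 0 ≤ (max 1 q)^m * (z ^ (-(s/q)) * Real.exp (-(1/2) * z)) := by positivity
  rcases eq_or_lt_of_le hzN with hzeq | hzlt
  · -- z = N : LHS = 0
    have h0 : (1 - z / N) = 0 := by rw [hzeq]; field_simp; norm_num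
    rw [h0, zero_pow (by omega : n ≠ 0), mul_zero]
    exact hRHS
  · set c : ℝ := (z/N) ^ (1/q) with hcdef
    have hc0 : 0 < c := rpow_pos_of_pos (div_pos hz hN) _
    have hc1 : c < 1 := rpow_lt_one (div_pos hz hN).le ((div_lt_one hN).mpr hzlt) (by positivity)
    have hcz : z ^ (-1/q) * c = N ^ (-1/q) := by
      rw [hcdef, div_rpow hz.le hN.le, mul_div_assoc', ← Real.rpow_add hz,
        show -1/q + 1/q = 0 by ring, rpow_zero, neg_div, one_div,
        Real.rpow_neg hN.le, one_div]
    have hbase : z ^ (-1/q) - N ^ (-1/q) = z ^ (-1/q) * (1 - c) := by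
      rw [mul_sub, mul_one, hcz]
    have hcq : (1:ℝ) - z / N = 1 - c ^ q := by
      rw [hcdef, ← Real.rpow_mul (div_pos hz hN).le, one_div,
        inv_mul_cancel₀ hq.ne', rpow_one]
    have h1c : 0 < 1 - c := by linarith
    have hcqpos : 0 < 1 - c ^ q := by
      rw [← hcq]; have : z / N < 1 := (div_lt_one hN).mpr hzlt; linarith
    -- rewrite LHS
    rw [hbase, hcq, mul_rpow (rpow_nonneg hz.le _) h1c.le,
      ← Real.rpow_mul hz.le, show -1/q * s = -(s/q) by ring]
    -- split the power
    have hmn : m ≤ n := by omega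
    have hsplit : (1 - c ^ q) ^ n = (1 - c ^ q) ^ m * (1 - c ^ q) ^ (n - m) := by
      rw [← pow_add, Nat.add_sub_cancel' hmn]
    rw [hsplit]
    -- claim A : (1-c)^s * (1-c^q)^m ≤ K^m
    have hcqK : 1 - c ^ q ≤ (max 1 q) * (1 - c) := by
      rcases le_total q 1 with hq1 | hq1
      · have : c ^ (1:ℝ) ≤ c ^ q := rpow_le_rpow_of_exponent_ge hc0 hc1.le hq1
        rw [rpow_one] at this
        nlinarith [le_max_left 1 q]
      · have := one_add_mul_self_le_rpow_one_add (by linarith : (-1:ℝ) ≤ c - 1) hq1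
        rw [show (1:ℝ) + (c-1) = c by ring] at this
        nlinarith [le_max_right 1 q]
    have hA : (1 - c) ^ s * (1 - c ^ q) ^ m ≤ (max 1 q) ^ m := by
      have h1 : (1 - c ^ q) ^ m ≤ ((max 1 q) * (1 - c)) ^ m :=
        pow_le_pow_left₀ hcqpos.le hcqK m
      have h2 : (1 - c) ^ s * (1 - c ^ q) ^ m ≤ (1 - c) ^ s * ((max 1 q) ^ m * (1 - c) ^ m) := by
        rw [mul_pow] at h1
        exact mul_le_mul_of_nonneg_left h1 (rpow_nonneg h1c.le _)
      refine h2.trans ?_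
      have h3 : (1 - c) ^ s * (1 - c) ^ m = (1 - c) ^ (s + m) := by
        rw [← Real.rpow_natCast (1-c) m, ← Real.rpow_add h1c]
      calc (1 - c) ^ s * ((max 1 q) ^ m * (1 - c) ^ m)
          = (max 1 q) ^ m * ((1 - c) ^ (s + m)) := by rw [← h3]; ring
        _ ≤ (max 1 q) ^ m * 1 := by
            refine mul_le_mul_of_nonneg_left ?_ (by positivity)
            exact rpow_le_one h1c.le (by linarith) (by linarith)
        _ = (max 1 q) ^ m := mul_one _
    -- claim B : (1-c^q)^(n-m) ≤ exp(-(1/2)z)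
    have hB : (1 - c ^ q) ^ (n - m) ≤ Real.exp (-(1/2) * z) := by
      have hle : 1 - c ^ q ≤ Real.exp (-(z/N)) := by
        rw [← hcq]
        have := Real.add_one_le_exp (-(z/N))
        linarith
      have h1 : (1 - c ^ q) ^ (n - m) ≤ Real.exp (-(z/N)) ^ (n - m) :=
        pow_le_pow_left₀ hcqpos.le hle _
      refine h1.trans ?_
      rw [← Real.exp_nat_mul]
      apply Real.exp_le_exp.mpr
      have h2k : N ≤ 2 * ((n - m : ℕ) : ℝ) := by
        have : n + 1 ≤ 2 * (n - m) := by omega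
        have := (Nat.cast_le (α := ℝ)).mpr this
        push_cast at this
        rw [hNdef]; linarith
      have hfin : z / 2 ≤ ((n - m : ℕ) : ℝ) * z / N := by
        rw [div_le_div_iff₀ two_pos hN]; nlinarith
      have heq : ((n - m : ℕ) : ℝ) * -(z/N) = -(((n - m : ℕ) : ℝ) * z / N) := by ring
      linarith [heq.le, heq.ge]
    -- combine
    calc z ^ (-(s/q)) * (1 - c) ^ s * ((1 - c ^ q) ^ m * (1 - c ^ q) ^ (n - m))
        = z ^ (-(s/q)) * (((1 - c) ^ s * (1 - c ^ q) ^ m) * (1 - c ^ q) ^ (n - m)) := by ring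
      _ ≤ z ^ (-(s/q)) * ((max 1 q) ^ m * Real.exp (-(1/2) * z)) := by
          refine mul_le_mul_of_nonneg_left ?_ (rpow_nonneg hz.le _)
          exact mul_le_mul hA hB (by positivity) (by positivity)
      _ = (max 1 q)^m * (z ^ (-(s/q)) * Real.exp (-(1/2) * z)) := by ring

lemma if2_nonneg {q s : ℝ} (hq : 0 < q) {n : ℕ} {z : ℝ} (hz : 0 < z) (hzN : z ≤ (n:ℝ)+1) :
    0 ≤ (z ^ (-1/q) - ((n:ℝ)+1) ^ (-1/q)) ^ s * (1 - z/((n:ℝ)+1)) ^ n := by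
  have hN : (0:ℝ) < (n:ℝ)+1 := by positivity
  have h1 : ((n:ℝ)+1) ^ (-1/q) ≤ z ^ (-1/q) :=
    Real.rpow_le_rpow_of_nonpos hz hzN (by rw [neg_div]; exact neg_nonpos.mpr (by positivity))
  have h2 : (0:ℝ) ≤ 1 - z/((n:ℝ)+1) := by
    rw [sub_nonneg, div_le_one hN]; exact hzN
  exact mul_nonneg (Real.rpow_nonneg (by linarith) _) (pow_nonneg h2 _)

theorem if2_moment_limit (q s : ℝ) (hq : 0 < q) (hs : s < q) :
    Tendsto
      (fun n : ℕ =>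
        ∫ z in (0:ℝ)..((n : ℝ) + 1),
          (z ^ (-1 / q) - ((n : ℝ) + 1) ^ (-1 / q)) ^ s * (1 - z / ((n : ℝ) + 1)) ^ n)
      atTop (nhds (Real.Gamma (1 - s / q))) := by
  have ha : s / q < 1 := (div_lt_one hq).mpr hs
  have hGa : (0:ℝ) < 1 - s/q := by linarith
  obtain ⟨m, hm⟩ : ∃ m : ℕ, -s ≤ (m:ℝ) := ⟨⌈-s⌉₊, Nat.le_ceil _⟩
  set μ : Measure ℝ := volume.restrict (Set.Ioi 0) with hμ
  set F : ℕ → ℝ → ℝ := fun n z => Set.indicator (Set.Ioc 0 ((n:ℝ)+1))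
      (fun z => (z ^ (-1/q) - ((n:ℝ)+1) ^ (-1/q)) ^ s * (1 - z/((n:ℝ)+1)) ^ n) z with hF
  set bound : ℝ → ℝ := fun z => (max 1 q)^m * (z ^ (-(s/q)) * Real.exp (-(1/2) * z)) with hbd
  set f : ℝ → ℝ := fun z => Real.exp (-z) * z ^ (-(s/q)) with hf
  -- measurability
  have hmeas : ∀ n : ℕ, AEStronglyMeasurable (F n) μ := by
    intro n
    apply Measurable.aestronglyMeasurable
    apply Measurable.indicator ?_ measurableSet_Ioc
    fun_prop
  -- eventual bound
  have hbound : ∀ᶠ n in atTop, ∀ᵐ z ∂μ, ‖F n z‖ ≤ bound z := by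
    filter_upwards [eventually_ge_atTop (2*m+1)] with n hn
    rw [hμ]
    filter_upwards [ae_restrict_mem measurableSet_Ioi] with z hz
    have hz0 : (0:ℝ) < z := hz
    by_cases hzmem : z ∈ Set.Ioc (0:ℝ) ((n:ℝ)+1)
    · rw [hF]; simp only
      rw [Set.indicator_of_mem hzmem,
        Real.norm_of_nonneg (if2_nonneg hq hz0 hzmem.2)]
      exact if2_key hq hm hn hz0 hzmem.2
    · rw [hF]; simp only
      rw [Set.indicator_of_notMem hzmem, norm_zero, hbd]
      have h1 : (1:ℝ) ≤ max 1 q := le_max_left _ _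
      positivity
  -- integrability of the bound
  have hbint : Integrable bound μ := by
    have h0 : IntegrableOn (fun x : ℝ => x ^ (-(s/q)) * Real.exp (-(1/2) * x ^ (1:ℝ)))
        (Set.Ioi 0) :=
      integrableOn_rpow_mul_exp_neg_mul_rpow (by linarith) one_pos (by norm_num)
    simp only [Real.rpow_one] at h0
    exact h0.const_mul _
  -- pointwise limit
  have hlim : ∀ᵐ z ∂μ, Tendsto (fun n => F n z) atTop (𝓝 (f z)) := by
    rw [hμ]
    filter_upwards [ae_restrict_mem measurableSet_Ioi] with z hz
    have hz0 : (0:ℝ) < z := hz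
    have hA : Tendsto (fun n:ℕ => ((n:ℝ)+1) ^ (-1/q)) atTop (𝓝 0) := by
      have h1 : Tendsto (fun x:ℝ => x ^ (-(1/q))) atTop (𝓝 0) :=
        tendsto_rpow_neg_atTop (by positivity)
      have h2 : Tendsto (fun n:ℕ => (n:ℝ)+1) atTop atTop :=
        tendsto_atTop_add_const_right _ 1 tendsto_natCast_atTop_atTop
      simpa [neg_div, Function.comp_def] using h1.comp h2
    have h1 : Tendsto (fun n:ℕ => (z ^ (-1/q) - ((n:ℝ)+1) ^ (-1/q)) ^ s) atTop
        (𝓝 (z ^ (-(s/q)))) := by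
      have hb : Tendsto (fun n:ℕ => z ^ (-1/q) - ((n:ℝ)+1) ^ (-1/q)) atTop
          (𝓝 (z ^ (-1/q))) := by
        simpa using tendsto_const_nhds.sub hA
      have hc := hb.rpow_const (p := s) (Or.inl (ne_of_gt (Real.rpow_pos_of_pos hz0 _)))
      rwa [← Real.rpow_mul hz0.le, show -1/q * s = -(s/q) by ring] at hc
    have h2 : Tendsto (fun n:ℕ => (1 - z/((n:ℝ)+1)) ^ n) atTop (𝓝 (Real.exp (-z))) := by
      have hp : Tendsto (fun n:ℕ => (1 - z/((n:ℝ)+1)) ^ (n+1)) atTop (𝓝 (Real.exp (-z))) := by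
        have hc := (Real.tendsto_one_add_div_pow_exp (-z)).comp (tendsto_add_atTop_nat 1)
        apply hc.congr
        intro n
        simp only [Function.comp]
        push_cast
        ring_nf
      have hden : Tendsto (fun n:ℕ => 1 - z/((n:ℝ)+1)) atTop (𝓝 1) := by
        have h3 : Tendsto (fun n:ℕ => z * (1/((n:ℝ)+1))) atTop (𝓝 0) := by
          simpa using tendsto_one_div_add_atTop_nhds_zero_nat.const_mul z
        have h4 := (tendsto_const_nhds (x := (1:ℝ))).sub h3
        simp only [sub_zero, mul_one_div] at h4
        exact h4
      have hdiv := hp.div hden one_ne_zero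
      rw [div_one] at hdiv
      apply hdiv.congr'
      filter_upwards [eventually_gt_atTop ⌈z⌉₊] with n hn
      have hzn : z < (n:ℝ)+1 := by
        have := Nat.le_ceil z
        have h5 : (⌈z⌉₊:ℝ) ≤ (n:ℝ) := Nat.cast_le.mpr hn.le
        linarith
      have hpos : (0:ℝ) < 1 - z/((n:ℝ)+1) := by
        rw [sub_pos, div_lt_one (by positivity)]; exact hzn
      simp only [Pi.div_apply]
      rw [pow_succ, mul_div_assoc, div_self hpos.ne', mul_one]
    have hmul := h1.mul h2
    rw [show z ^ (-(s/q)) * Real.exp (-z) = f z by rw [hf]; ring] at hmul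
    apply hmul.congr'
    filter_upwards [eventually_ge_atTop ⌈z⌉₊] with n hn
    have hzn : z ≤ (n:ℝ)+1 := by
      have := Nat.le_ceil z
      have h5 : (⌈z⌉₊:ℝ) ≤ (n:ℝ) := Nat.cast_le.mpr hn
      linarith
    rw [hF]; simp only
    rw [Set.indicator_of_mem (Set.mem_Ioc.mpr ⟨hz0, hzn⟩)]
  -- dominated convergence
  have key : Tendsto (fun n => ∫ z, F n z ∂μ) atTop (𝓝 (∫ z, f z ∂μ)) :=
    tendsto_integral_filter_of_dominated_convergence bound
      (Eventually.of_forall hmeas) hbound hbint hlim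
  have hG : (∫ z, f z ∂μ) = Real.Gamma (1 - s/q) := by
    rw [Real.Gamma_eq_integral hGa, show (1 - s/q) - 1 = -(s/q) by ring]
  rw [hG] at key
  apply key.congr
  intro n
  rw [intervalIntegral.integral_of_le (by positivity : (0:ℝ) ≤ (n:ℝ)+1)]
  rw [hF]; simp only
  rw [MeasureTheory.integral_indicator measurableSet_Ioc, hμ,
    Measure.restrict_restrict measurableSet_Ioc,
    Set.inter_eq_left.mpr Set.Ioc_subset_Ioi_self]
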